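/- arXiv:dg-ga/9408001 — 4 statements merged into one kernel-verified Lean document; each statement's English description precedes it below -/
import Mathlib

section
/- Let K be a compact Lie group acting on a finite-dimensional complex inner product space V by unitary transformations, with Lie algebra 𝔨 acting by skew-Hermitian operators. Define the momentum map Φ : V → 𝔨* by Φ(v)(ξ) = (i/2)⟨ξv, v⟩. Suppose v ∈ V and μ = Φ(v) satisfy 𝔨_μ = [𝔨_μ, 𝔨_μ] + 𝔨_v, where 𝔨_μ is the coadjoint stabilizer algebra of μ and 𝔨_v = {ξ ∈ 𝔨 : ξv = 0}. Then μ = 0. -/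
/-- Lemma 6.8: if the momentum map value `μ = Φ(v)` of a unitary (skew-Hermitian)
Lie algebra action satisfies `𝔨_μ = [𝔨_μ, 𝔨_μ] + 𝔨_v`, then `μ = 0`.  Compactness of
the group is encoded by an ad-invariant inner product on the Lie algebra `𝔨`. -/
theorem momentum_value_zero_of_stabilizer_condition
    {𝔨 V : Type*} [LieRing 𝔨] [LieAlgebra ℝ 𝔨]
    [NormedAddCommGroup 𝔨] [InnerProductSpace ℝ 𝔨] [FiniteDimensional ℝ 𝔨]
    [NormedAddCommGroup V] [InnerProductSpace ℂ V] [FiniteDimensional ℂ V]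
    (hinv : ∀ ξ η ζ : 𝔨, (inner ℝ (⁅ξ, η⁆ : 𝔨) ζ : ℝ) = -(inner ℝ η (⁅ξ, ζ⁆ : 𝔨) : ℝ))
    (π : 𝔨 →ₗ[ℝ] (V →ₗ[ℂ] V))
    (hπ : ∀ ξ η : 𝔨, π ⁅ξ, η⁆ = π ξ ∘ₗ π η - π η ∘ₗ π ξ)
    (hskew : ∀ (ξ : 𝔨) (x y : V), (inner ℂ (π ξ x) y : ℂ) = -(inner ℂ x (π ξ y) : ℂ))
    (v : V) (μ : 𝔨 → ℝ)
    -- `μ(ξ) = (i/2)⟨ξv, v⟩`, the inner product being conjugate-linear in the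
    -- second variable (so `⟨ξv, v⟩` is Mathlib's `inner v (ξv)`)
    (hμ : ∀ ξ : 𝔨, μ ξ = ((Complex.I / 2) * (inner ℂ v (π ξ v) : ℂ)).re)
    -- `𝔨_μ = [𝔨_μ, 𝔨_μ] + 𝔨_v`
    (hcond : ∀ ξ : 𝔨, (∀ η : 𝔨, μ ⁅ξ, η⁆ = 0) →
      ∃ χ ζ η' : 𝔨, (∀ a : 𝔨, μ ⁅χ, a⁆ = 0) ∧ (∀ a : 𝔨, μ ⁅ζ, a⁆ = 0) ∧
        π η' v = 0 ∧ ξ = ⁅χ, ζ⁆ + η') :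
    ∀ ξ : 𝔨, μ ξ = 0 := by
  -- μ is additive and ℝ-homogeneous
  have hadd : ∀ ξ η : 𝔨, μ (ξ + η) = μ ξ + μ η := by
    intro ξ η
    simp [hμ, map_add, inner_add_right, mul_add, Complex.add_re]
  have hsmul : ∀ (c : ℝ) (ξ : 𝔨), μ (c • ξ) = c * μ ξ := by
    intro c ξ
    have : π (c • ξ) v = (c : ℂ) • π ξ v := by
      simp [map_smul, Complex.coe_smul]
    rw [hμ, hμ, this, inner_smul_right]
    rw [show Complex.I / 2 * ((c : ℂ) * inner ℂ v ((π ξ) v)) =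
        (c : ℂ) * (Complex.I / 2 * inner ℂ v ((π ξ) v)) by ring]
    exact Complex.re_ofReal_mul _ _
  -- core claim: μ vanishes on 𝔨_μ
  have hker : ∀ ξ : 𝔨, (∀ η : 𝔨, μ ⁅ξ, η⁆ = 0) → μ ξ = 0 := by
    intro ξ hξ
    obtain ⟨χ, ζ, η', hχ, hζ, hη', rfl⟩ := hcond ξ hξ
    have h1 : μ η' = 0 := by
      rw [hμ, hη']
      simp
    rw [hadd, hχ ζ, h1, add_zero]
  -- package μ as a continuous linear functional and take its Riesz vector
  let μL : 𝔨 →ₗ[ℝ] ℝ :=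
    { toFun := μ
      map_add' := hadd
      map_smul' := hsmul }
  let b := stdOrthonormalBasis ℂ V
  have hsq : ∀ ξ : 𝔨, -(LinearMap.trace ℂ V (π ξ ∘ₗ π ξ)).re = ∑ i, ‖π ξ (b i)‖ ^ 2 := by
    intro ξ
    rw [LinearMap.trace_eq_sum_inner _ b, Complex.re_sum, ← Finset.sum_neg_distrib]
    refine Finset.sum_congr rfl fun i _ => ?_
    rw [LinearMap.comp_apply, ← Complex.neg_re, ← hskew, inner_self_eq_norm_sq_to_K]
    norm_cast
  have hdef : ∀ ξ : 𝔨, -(LinearMap.trace ℂ V (π ξ ∘ₗ π ξ)).re = 0 → π ξ = 0 := by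
    intro ξ h
    rw [hsq] at h
    have h' := (Finset.sum_eq_zero_iff_of_nonneg (fun i _ => sq_nonneg ‖π ξ (b i)‖)).mp h
    apply b.toBasis.ext
    intro i
    have := h' i (Finset.mem_univ i)
    simpa using this
  have htr : ∀ (c : ℝ) (T : V →ₗ[ℂ] V), LinearMap.trace ℂ V (c • T) = (c : ℂ) * LinearMap.trace ℂ V T := by
    intro c T
    rw [← Complex.coe_smul, map_smul, smul_eq_mul]
  let Bf : 𝔨 →ₗ[ℝ] 𝔨 →ₗ[ℝ] ℝ :=
    LinearMap.mk₂ ℝ (fun ξ η => -(LinearMap.trace ℂ V (π ξ ∘ₗ π η)).re)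
      (by intro a a' c; simp only [map_add, LinearMap.add_comp, Complex.add_re]; ring)
      (by intro c a a'; rw [map_smul, LinearMap.smul_comp, htr, Complex.re_ofReal_mul, smul_eq_mul, mul_neg])
      (by intro a c c'; simp only [map_add, LinearMap.comp_add, Complex.add_re]; ring)
      (by intro c a a'; rw [map_smul, LinearMap.comp_smul, htr, Complex.re_ofReal_mul, smul_eq_mul, mul_neg])
  have hBsymm : ∀ ξ η, Bf ξ η = Bf η ξ := by
    intro ξ η
    show -(LinearMap.trace ℂ V (π ξ ∘ₗ π η)).re = -(LinearMap.trace ℂ V (π η ∘ₗ π ξ)).re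
    rw [LinearMap.trace_comp_comm']
  obtain ⟨X, hX⟩ : μL ∈ LinearMap.range Bf := by
    have hr : LinearMap.range Bf.dualMap = (LinearMap.ker Bf).dualAnnihilator :=
      LinearMap.range_dualMap_eq_dualAnnihilator_ker Bf
    have hμm : μL ∈ LinearMap.range Bf.dualMap := by
      rw [hr, Submodule.mem_dualAnnihilator]
      intro w hw
      have hw0 : π w = 0 := hdef w (LinearMap.congr_fun (LinearMap.mem_ker.mp hw) w)
      show μ w = 0
      rw [hμ, hw0]
      simp
    obtain ⟨ψ, hψ⟩ := hμm
    refine ⟨(Module.evalEquiv ℝ 𝔨).symm ψ, ?_⟩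
    rw [← hψ]
    ext η
    rw [LinearMap.dualMap_apply, hBsymm]
    exact Module.apply_evalEquiv_symm_apply (R := ℝ) (M := 𝔨) (Bf η) ψ
  have hXμ : ∀ ξ : 𝔨, μ ξ = Bf X ξ := fun ξ => (LinearMap.congr_fun hX ξ).symm
  -- antisymmetry of ξ,η ↦ μ ⁅ξ, η⁆, from hπ and hμ alone
  have hanti : ∀ ξ η : 𝔨, μ ⁅ξ, η⁆ = -μ ⁅η, ξ⁆ := by
    intro ξ η
    rw [hμ, hμ, hπ ξ η, hπ η ξ]
    simp only [LinearMap.sub_apply, LinearMap.comp_apply, inner_sub_right]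
    rw [← Complex.neg_re]
    ring_nf
  have hXstab : ∀ η : 𝔨, μ ⁅X, η⁆ = 0 := by
    intro η
    rw [hXμ]
    show -(LinearMap.trace ℂ V (π X ∘ₗ π ⁅X, η⁆)).re = 0
    have hc : LinearMap.trace ℂ V (π X ∘ₗ (π η ∘ₗ π X)) =
        LinearMap.trace ℂ V (π X ∘ₗ (π X ∘ₗ π η)) := by
      rw [LinearMap.trace_comp_comm' (π η ∘ₗ π X) (π X), LinearMap.comp_assoc,
        LinearMap.trace_comp_comm' (π X ∘ₗ π X) (π η), LinearMap.comp_assoc]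
    rw [hπ, LinearMap.comp_sub, map_sub, hc, sub_self]
    simp
  have hX0 : π X = 0 := by
    apply hdef
    have := hker X hXstab
    rw [hXμ] at this
    exact this
  intro ξ
  rw [hXμ]
  show -(LinearMap.trace ℂ V (π X ∘ₗ π ξ)).re = 0
  rw [hX0]
  simp
end

section
/- Let A = ℂ[x,y]/(x^n) be graded by total degree and let an action of S¹ have weight kλ on the monomial x^k y^l (λ a fixed nonzero weight). Then the set {kλ/(k+l) : k,l ∈ ℕ, k < n, (k,l) ≠ (0,0), and x^k y^l ≠ 0 in A} equals {(k/(k+l))λ : 0 ≤ k < n, k+l > 0}, and for n ≥ 2 this set cannot be written as a finite union of convex subsets of ℚλ ≅ ℚ. -/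
open MvPolynomial

/-- The key arithmetic fact: `n/(n*(a+1)+1)` is not of the form `k/(k+l)` with
`k < n`, `0 < k + l`. -/
lemma bad_not_ratio (n : ℕ) (hn : 2 ≤ n) (a : ℕ) (k l : ℕ) (hk : k < n)
    (hpos : 0 < k + l)
    (h : ((n : ℚ) / ((n : ℚ) * ((a : ℚ) + 1) + 1)) = (k : ℚ) / ((k : ℚ) + (l : ℚ))) :
    False := by
  have hd1 : ((n : ℚ) * ((a : ℚ) + 1) + 1) ≠ 0 := by positivity
  have hd2 : ((k : ℚ) + (l : ℚ)) ≠ 0 := by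
    have : (0:ℚ) < (k : ℚ) + (l : ℚ) := by
      have : (0:ℚ) < ((k + l : ℕ) : ℚ) := by exact_mod_cast hpos
      push_cast at this; linarith
    linarith
  rw [div_eq_div_iff hd1 hd2] at h
  -- cast to ℕ
  have hnat : n * (k + l) = k * (n * (a + 1) + 1) := by
    have : ((n * (k + l) : ℕ) : ℚ) = ((k * (n * (a + 1) + 1) : ℕ) : ℚ) := by
      push_cast; ring_nf; ring_nf at h; linarith
    exact_mod_cast this
  have hdvd : n ∣ k := by
    have h1 : n ∣ k * (n * (a + 1)) + k := ⟨k + l, by rw [hnat]; ring⟩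
    have h2 : n ∣ k * (n * (a + 1)) := ⟨k * (a + 1), by ring⟩
    exact (Nat.dvd_add_right h2).mp h1
  have hk0 : k = 0 := Nat.eq_zero_of_dvd_of_lt hdvd hk
  subst hk0
  simp at hnat
  omega

/-- Example 3.6: for `A = ℂ[x,y]/(xⁿ)` with the `S¹`-action of weight `kλ` on
`x^k y^l`, the highest-weight set `{kλ/(k+l)}` over nonzero monomials of positive
degree equals `{(k/(k+l))λ : k < n, k+l > 0}`, and for `n ≥ 2` this set is not a
finite union of convex subsets of `ℚλ ≅ ℚ`. -/
theorem highest_weight_set_unreduced_example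
    (n : ℕ) (hn : 2 ≤ n) (lam : ℚ) (hlam : lam ≠ 0) :
    ({q : ℚ | ∃ k l : ℕ, k < n ∧ (k, l) ≠ (0, 0) ∧
        Ideal.Quotient.mk (Ideal.span {(X 0 ^ n : MvPolynomial (Fin 2) ℂ)})
          (X 0 ^ k * X 1 ^ l) ≠ 0 ∧
        q = ((k : ℚ) / ((k : ℚ) + (l : ℚ))) * lam} =
      {q : ℚ | ∃ k l : ℕ, k < n ∧ 0 < k + l ∧
        q = ((k : ℚ) / ((k : ℚ) + (l : ℚ))) * lam}) ∧
    ¬ ∃ (m : ℕ) (C : Fin m → Set ℚ), (∀ i, Convex ℚ (C i)) ∧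
        {q : ℚ | ∃ k l : ℕ, k < n ∧ 0 < k + l ∧
          q = ((k : ℚ) / ((k : ℚ) + (l : ℚ))) * lam} = ⋃ i, C i := by
  constructor
  · ext q
    simp only [Set.mem_setOf_eq]
    constructor
    · rintro ⟨k, l, hk, hne, -, hq⟩
      refine ⟨k, l, hk, ?_, hq⟩
      rcases Nat.eq_zero_or_pos (k + l) with h | h
      · exact absurd (by simp [Prod.ext_iff]; omega) hne
      · exact h
    · rintro ⟨k, l, hk, hpos, hq⟩
      refine ⟨k, l, hk, by simp [Prod.ext_iff]; omega, ?_, hq⟩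
      intro h
      rw [Ideal.Quotient.eq_zero_iff_mem, Ideal.mem_span_singleton] at h
      have h2 := map_dvd (aeval (fun i : Fin 2 =>
        if i = 0 then (Polynomial.X : Polynomial ℂ) else 1)) h
      simp only [map_mul, map_pow, aeval_X, if_pos rfl] at h2
      norm_num at h2
      have := Polynomial.natDegree_le_of_dvd h2 (pow_ne_zero _ Polynomial.X_ne_zero)
      simp [Polynomial.natDegree_X_pow] at this
      omega
  · rintro ⟨m, C, hC, hS⟩
    set S : Set ℚ := {q : ℚ | ∃ k l : ℕ, k < n ∧ 0 < k + l ∧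
          q = ((k : ℚ) / ((k : ℚ) + (l : ℚ))) * lam} with hSdef
    set p : ℕ → ℚ := fun j => ((1 : ℚ) / (1 + (j : ℚ))) * lam with hp
    have hpS : ∀ j, p j ∈ S := by
      intro j
      exact ⟨1, j, by omega, by omega, by push_cast [hp]; ring_nf⟩
    have hpU : ∀ j, ∃ i, p j ∈ C i := by
      intro j
      have := hpS j
      rw [hS] at this
      exact Set.mem_iUnion.mp this
    choose f hf using hpU
    obtain ⟨j, j', hjj, hfe⟩ := Finite.exists_ne_map_eq_of_infinite f
    -- WLOG j < j'
    wlog hlt : j < j' generalizing j j'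
    · exact this j' j (Ne.symm hjj) hfe.symm (by omega)
    -- the bad point
    set w : ℚ := ((n : ℚ) / ((n : ℚ) * ((j : ℚ) + 1) + 1)) * lam with hw
    have hwS : w ∉ S := by
      rintro ⟨k, l, hk, hpos, hq⟩
      have : ((n : ℚ) / ((n : ℚ) * ((j : ℚ) + 1) + 1)) = (k : ℚ) / ((k : ℚ) + (l : ℚ)) :=
        mul_right_cancel₀ hlam (hw ▸ hq ▸ rfl)
      exact bad_not_ratio n hn j k l hk hpos this
    -- ordering facts (without lam)
    have hjq : (0:ℚ) < 1 + (j : ℚ) := by positivity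
    have hj'q : (0:ℚ) < 1 + (j' : ℚ) := by positivity
    have hdq : (0:ℚ) < (n : ℚ) * ((j : ℚ) + 1) + 1 := by positivity
    have hnq : (2:ℚ) ≤ (n : ℚ) := by exact_mod_cast hn
    have hj'j : (j : ℚ) + 1 ≤ (j' : ℚ) := by
      have : (j + 1 : ℕ) ≤ j' := hlt
      exact_mod_cast this
    have h1 : (1 : ℚ) / (1 + (j' : ℚ)) < (n : ℚ) / ((n : ℚ) * ((j : ℚ) + 1) + 1) := by
      rw [div_lt_div_iff₀ hj'q hdq]
      nlinarith
    have h2 : (n : ℚ) / ((n : ℚ) * ((j : ℚ) + 1) + 1) < (1 : ℚ) / (1 + (j : ℚ)) := by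
      rw [div_lt_div_iff₀ hdq hjq]
      nlinarith
    have hwC : w ∈ C (f j) := by
      apply (hC (f j)).segment_subset (hfe ▸ hf j') (hf j)
      rw [segment_eq_uIcc, Set.mem_uIcc]
      simp only [hp, hw]
      rcases hlam.lt_or_gt with hneg | hpos
      · right
        constructor <;> nlinarith
      · left
        constructor <;> nlinarith
    have : w ∈ S := by rw [hS]; exact Set.mem_iUnion.mpr ⟨f j, hwC⟩
    exact hwS this
end

section
/- Properness of the momentum map on orbits (Lemma 4.7, diagonal version): Let β₁,…,β_d be linear functionals on a finite-dimensional real vector space 𝔱 and ρ > 0. Suppose sequences ξ(n) ∈ 𝔱 and v_i(n) ∈ ℂ with |v_i(n)| ≤ ρ satisfy f(n) = Σ_i e^{2β_i(ξ(n))}|v_i(n)|² → ∞. Then there is a subsequence and a unit vector η ∈ 𝔱 such that (1/2) Σ_i β_i(η) e^{2β_i(ξ(n))}|v_i(n)|² → ∞ along the subsequence. -/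
open scoped BigOperators
open Filter Topology
open scoped ENNReal NNReal

/-- Computational core of Lemma 4.7: if the weighted exponential sums
`Σ_i e^{2β_i(ξ(n))}|v_i(n)|²` tend to infinity, with bounded coefficients
`|v_i(n)| ≤ ρ`, then along a subsequence there is a unit vector `η` such that
`(1/2) Σ_i β_i(η) e^{2β_i(ξ(n))}|v_i(n)|²` tends to infinity. -/
theorem momentum_unbounded_along_subsequence
    {𝔱 : Type*} [NormedAddCommGroup 𝔱] [InnerProductSpace ℝ 𝔱] [FiniteDimensional ℝ 𝔱]
    {d : ℕ} (β : Fin d → (𝔱 →ₗ[ℝ] ℝ)) (ρ : ℝ) (hρ : 0 < ρ)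
    (ξ : ℕ → 𝔱) (v : Fin d → ℕ → ℂ)
    (hbound : ∀ i n, ‖v i n‖ ≤ ρ)
    (hf : Tendsto (fun n => ∑ i, Real.exp (2 * β i (ξ n)) * ‖v i n‖ ^ 2)
      atTop atTop) :
    ∃ φ : ℕ → ℕ, StrictMono φ ∧ ∃ η : 𝔱, ‖η‖ = 1 ∧
      Tendsto
        (fun n => (1 / 2) * ∑ i, β i η * Real.exp (2 * β i (ξ (φ n))) *
          ‖v i (φ n)‖ ^ 2)
        atTop atTop := by
  classical
  set t : Fin d → ℕ → ℝ := fun i n => Real.exp (2 * β i (ξ n)) * ‖v i n‖ ^ 2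
    with ht
  have htnonneg : ∀ i n, 0 ≤ t i n := fun i n =>
    mul_nonneg (Real.exp_pos _).le (sq_nonneg _)
  obtain ⟨L, φ, hφ, hL⟩ := CompactSpace.tendsto_subseq
    (fun n (i : Fin d) => ENNReal.ofReal (t i n))
  refine ⟨φ, hφ, ?_⟩
  have hLi : ∀ i, Tendsto (fun n => ENNReal.ofReal (t i (φ n))) atTop (𝓝 (L i)) := by
    intro i
    exact tendsto_pi_nhds.mp hL i
  -- bounded coordinates
  have hbdd : ∀ i, ∃ C : ℝ, L i ≠ ⊤ → ∀ n, t i (φ n) ≤ C := by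
    intro i
    by_cases hi : L i = ⊤
    · exact ⟨0, fun h => absurd hi h⟩
    · have h1 : Tendsto (fun n => t i (φ n)) atTop (𝓝 (L i).toReal) := by
        exact ((ENNReal.tendsto_toReal hi).comp (hLi i)).congr
          (fun n => ENNReal.toReal_ofReal (htnonneg i (φ n)))
      obtain ⟨C, hC⟩ := h1.bddAbove_range
      exact ⟨C, fun _ n => hC ⟨n, rfl⟩⟩
  choose C hC using hbdd
  -- unbounded coordinates
  have htop : ∀ i, L i = ⊤ → Tendsto (fun n => t i (φ n)) atTop atTop := by
    intro i hi
    rw [tendsto_atTop]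
    intro b
    have h2 : ∀ᶠ n in atTop, (b.toNNReal : ℝ≥0∞) < ENNReal.ofReal (t i (φ n)) := by
      have := hLi i
      rw [hi, ENNReal.tendsto_nhds_top_iff_nnreal] at this
      exact this b.toNNReal
    filter_upwards [h2] with n hn
    by_contra hc
    push_neg at hc
    have hle : ENNReal.ofReal (t i (φ n)) ≤ ENNReal.ofReal b :=
      ENNReal.ofReal_le_ofReal hc.le
    exact absurd (hn.trans_le hle) (lt_irrefl _)
  -- the set of unbounded indices is nonempty
  set I : Finset (Fin d) := Finset.univ.filter (fun i => L i = ⊤) with hI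
  have hInonempty : I.Nonempty := by
    by_contra hne
    rw [Finset.not_nonempty_iff_eq_empty] at hne
    have hall : ∀ i, L i ≠ ⊤ := by
      intro i hi
      have : i ∈ I := by simp [hI, hi]
      simp [hne] at this
    have hsum : Tendsto (fun n => ∑ i, t i (φ n)) atTop (𝓝 (∑ i, (L i).toReal)) := by
      apply tendsto_finset_sum
      intro i _
      exact ((ENNReal.tendsto_toReal (hall i)).comp (hLi i)).congr
        (fun n => ENNReal.toReal_ofReal (htnonneg i (φ n)))
    have hsum' : Tendsto (fun n => ∑ i, t i (φ n)) atTop atTop :=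
      hf.comp hφ.tendsto_atTop
    exact not_tendsto_atTop_of_tendsto_nhds hsum hsum'
  -- for unbounded indices, β i (ξ (φ n)) → ∞
  have hβtop : ∀ i ∈ I, Tendsto (fun n => 2 * β i (ξ (φ n))) atTop atTop := by
    intro i hi
    have hiT : L i = ⊤ := by simpa [hI] using hi
    have h1 : Tendsto (fun n => Real.exp (2 * β i (ξ (φ n)))) atTop atTop := by
      apply tendsto_atTop_mono _ ((htop i hiT).atTop_div_const (by positivity : (0:ℝ) < ρ^2))
      intro n
      rw [div_le_iff₀ (by positivity)]
      have : ‖v i (φ n)‖ ^ 2 ≤ ρ ^ 2 := by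
        have := hbound i (φ n)
        nlinarith [norm_nonneg (v i (φ n))]
      calc t i (φ n) = Real.exp (2 * β i (ξ (φ n))) * ‖v i (φ n)‖ ^ 2 := rfl
        _ ≤ Real.exp (2 * β i (ξ (φ n))) * ρ ^ 2 := by
            exact mul_le_mul_of_nonneg_left this (Real.exp_pos _).le
    exact Real.tendsto_exp_comp_atTop.mp h1
  -- pick N with all relevant β positive
  have hev : ∀ᶠ n in atTop, ∀ i ∈ I, 0 < β i (ξ (φ n)) := by
    rw [Filter.eventually_all_finset]
    intro i hi
    filter_upwards [(hβtop i hi).eventually_gt_atTop 0] with n hn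
    linarith
  obtain ⟨N, hN⟩ := hev.exists
  obtain ⟨i₀, hi₀⟩ := hInonempty
  have hξN : ξ (φ N) ≠ 0 := by
    intro h0
    have := hN i₀ hi₀
    rw [h0, map_zero] at this
    exact lt_irrefl 0 this
  set η : 𝔱 := ‖ξ (φ N)‖⁻¹ • ξ (φ N) with hη
  have hnormξ : (0:ℝ) < ‖ξ (φ N)‖ := norm_pos_iff.mpr hξN
  refine ⟨η, ?_, ?_⟩
  · rw [hη, norm_smul, norm_inv, norm_norm, inv_mul_cancel₀ hnormξ.ne']
  -- positivity of β i η for i ∈ I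
  have hβη : ∀ i ∈ I, 0 < β i η := by
    intro i hi
    rw [hη, map_smul]
    exact mul_pos (inv_pos.mpr hnormξ) (hN i hi)
  -- final tendsto
  set K : ℝ := ∑ i ∈ Finset.univ.filter (fun i => ¬ L i = ⊤), |β i η| * C i with hK
  have hlow : ∀ n, (1/2) * (β i₀ η * t i₀ (φ n) - K) ≤
      (1/2) * ∑ i, β i η * Real.exp (2 * β i (ξ (φ n))) * ‖v i (φ n)‖ ^ 2 := by
    intro n
    have hsplit : ∑ i, β i η * Real.exp (2 * β i (ξ (φ n))) * ‖v i (φ n)‖ ^ 2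
        = ∑ i ∈ I, β i η * t i (φ n)
          + ∑ i ∈ Finset.univ.filter (fun i => ¬ L i = ⊤), β i η * t i (φ n) := by
      rw [hI, Finset.sum_filter_add_sum_filter_not]
      apply Finset.sum_congr rfl
      intro i _
      rw [ht]; ring
    rw [hsplit]
    have h1 : β i₀ η * t i₀ (φ n) ≤ ∑ i ∈ I, β i η * t i (φ n) := by
      apply Finset.single_le_sum _ hi₀
      intro i hi
      exact mul_nonneg (hβη i hi).le (htnonneg i _)
    have h2 : -K ≤ ∑ i ∈ Finset.univ.filter (fun i => ¬ L i = ⊤), β i η * t i (φ n) := by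
      rw [hK, ← Finset.sum_neg_distrib]
      apply Finset.sum_le_sum
      intro i hi
      have hiT : ¬ L i = ⊤ := by simpa using hi
      have hCb := hC i hiT n
      nlinarith [neg_abs_le (β i η), htnonneg i (φ n), abs_nonneg (β i η)]
    linarith
  apply tendsto_atTop_mono hlow
  apply Tendsto.const_mul_atTop (by norm_num : (0:ℝ) < 1/2)
  apply tendsto_atTop_add_const_right
  have hiT : L i₀ = ⊤ := by simpa [hI] using hi₀
  exact Tendsto.const_mul_atTop (hβη i₀ hi₀) (htop i₀ hiT)
end

section
/- Let ξ(n) be a sequence in a finite-dimensional real inner product space 𝔱 and β₁,…,β_d linear functionals such that β_i(ξ(n)) → ∞ for all i in a nonempty set I. Then there exists η ∈ 𝔱 with ‖η‖ = 1 and β_i(η) > 0 for all i ∈ I. -/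
open Filter

/-- If `β_i(ξ(n)) → ∞` for all `i` in a nonempty set `I`, then there is a unit
vector `η` with `β_i(η) > 0` for all `i ∈ I`. -/
theorem exists_unit_vector_positive_on_index_set
    {𝔱 : Type*} [NormedAddCommGroup 𝔱] [InnerProductSpace ℝ 𝔱] [FiniteDimensional ℝ 𝔱]
    {d : ℕ} (β : Fin d → (𝔱 →ₗ[ℝ] ℝ)) (ξ : ℕ → 𝔱)
    (I : Set (Fin d)) (hI : I.Nonempty)
    (htend : ∀ i ∈ I, Tendsto (fun n => β i (ξ n)) atTop atTop) :
    ∃ η : 𝔱, ‖η‖ = 1 ∧ ∀ i ∈ I, 0 < β i η := by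
  have hev : ∀ᶠ n in atTop, ∀ i ∈ I, (1:ℝ) ≤ β i (ξ n) := by
    rw [Set.Finite.eventually_all (Set.toFinite I)]
    intro i hi
    exact (htend i hi).eventually_ge_atTop 1
  obtain ⟨n, hn⟩ := hev.exists
  obtain ⟨i₀, hi₀⟩ := hI
  have hne : ξ n ≠ 0 := by
    intro h
    have := hn i₀ hi₀
    rw [h, map_zero] at this
    linarith
  have hnorm : (0:ℝ) < ‖ξ n‖ := norm_pos_iff.2 hne
  refine ⟨‖ξ n‖⁻¹ • ξ n, ?_, ?_⟩
  · rw [norm_smul, norm_inv, norm_norm, inv_mul_cancel₀ hnorm.ne']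
  · intro i hi
    rw [map_smul]
    have h1 := hn i hi
    positivity
end
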